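/- The polynomials f_k satisfy f_1(p,q) = 1 − p, f_2(p,q) = 1 − (1+q)p + p², and for every k ≥ 3 the recurrence f_k = p(1 − q^{k−1}) f_{k−2} + (1−p) f_{k−1}. -/

import Mathlib

namespace PaperF

open scoped Classical

/-- The number of fixed points `a(w)` of a permutation of `{1, …, k}`. -/
def fixCount {k : ℕ} (w : Equiv.Perm (Fin k)) : ℕ :=
  (Finset.univ.filter fun i => w i = i).card

/-- The number `c(-w)` of neat pairs of `w`: pairs `{i, j}` of distinct indices with
`w i < j` and `w j < i`. -/
def neatCount {k : ℕ} (w : Equiv.Perm (Fin k)) : ℕ :=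
  ((Finset.univ ×ˢ Finset.univ).filter
    fun pr : Fin k × Fin k => pr.1 < pr.2 ∧ w pr.1 < pr.2 ∧ w pr.2 < pr.1).card

/-- `f_k(p, q) = Σ_{w ∈ S_k, w² = 1} (p(1-q))^{(k - a(w))/2} (1-p)^{a(w)} q^{c(-w)}`,
the sum being over the involutions in the symmetric group on `{1, …, k}`. -/
noncomputable def f (k : ℕ) (p q : ℂ) : ℂ :=
  ∑ w ∈ Finset.univ.filter (fun w : Equiv.Perm (Fin k) => w * w = 1),
    (p * (1 - q)) ^ ((k - fixCount w) / 2) * (1 - p) ^ fixCount w * q ^ neatCount w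

section Aux

open Equiv Finset

variable {n : ℕ}

lemma optionCongr_removeNone {α : Type*} (τ : Equiv.Perm (Option α)) (h : τ none = none) :
    Equiv.optionCongr (Equiv.removeNone τ) = τ := by
  classical
  rw [map_equiv_removeNone τ, h, Equiv.swap_self]
  ext x
  rfl

def eOpt (j : Fin (n + 1)) : Fin (n + 2) ≃ Option (Option (Fin n)) :=
  finSuccEquivLast.trans (Equiv.optionCongr (finSuccEquiv' j))

@[simp] lemma eOpt_last (j : Fin (n + 1)) : eOpt j (Fin.last (n + 1)) = none := by
  simp [eOpt]

@[simp] lemma eOpt_castSucc_self (j : Fin (n + 1)) : eOpt j (Fin.castSucc j) = some none := by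
  simp [eOpt, finSuccEquiv'_at]

@[simp] lemma eOpt_castSucc_succAbove (j : Fin (n + 1)) (i : Fin n) :
    eOpt j (Fin.castSucc (j.succAbove i)) = some (some i) := by
  simp [eOpt, finSuccEquiv'_succAbove]

@[simp] lemma eOpt_symm_none (j : Fin (n + 1)) : (eOpt j).symm none = Fin.last (n + 1) := by
  simp [eOpt, ← Equiv.optionCongr_symm, Equiv.optionCongr_apply]

@[simp] lemma eOpt_symm_some_none (j : Fin (n + 1)) :
    (eOpt j).symm (some none) = Fin.castSucc j := by
  simp [eOpt, finSuccEquiv'_symm_none, ← Equiv.optionCongr_symm, Equiv.optionCongr_apply]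

@[simp] lemma eOpt_symm_some_some (j : Fin (n + 1)) (i : Fin n) :
    (eOpt j).symm (some (some i)) = Fin.castSucc (j.succAbove i) := by
  simp [eOpt, finSuccEquiv'_symm_some, ← Equiv.optionCongr_symm, Equiv.optionCongr_apply]

/-- Case B map: involution pairing `last` with `castSucc j`, acting as `v` elsewhere. -/
def Bmap (j : Fin (n + 1)) (v : Equiv.Perm (Fin n)) : Equiv.Perm (Fin (n + 2)) :=
  (eOpt j).symm.permCongr
    (Equiv.swap (none : Option (Option (Fin n))) (some none) *
      Equiv.optionCongr (Equiv.optionCongr v))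

@[simp] lemma Bmap_last (j : Fin (n + 1)) (v : Equiv.Perm (Fin n)) :
    Bmap j v (Fin.last (n + 1)) = Fin.castSucc j := by
  simp [Bmap, Equiv.Perm.mul_apply, Equiv.swap_apply_left]

@[simp] lemma Bmap_castSucc_self (j : Fin (n + 1)) (v : Equiv.Perm (Fin n)) :
    Bmap j v (Fin.castSucc j) = Fin.last (n + 1) := by
  simp [Bmap, Equiv.Perm.mul_apply, Equiv.swap_apply_right]

@[simp] lemma Bmap_succAbove (j : Fin (n + 1)) (v : Equiv.Perm (Fin n)) (i : Fin n) :
    Bmap j v (Fin.castSucc (j.succAbove i)) = Fin.castSucc (j.succAbove (v i)) := by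
  simp [Bmap, Equiv.Perm.mul_apply, Equiv.swap_apply_of_ne_of_ne]

/-- Case A map: extension fixing `last`. -/
def Amap (w : Equiv.Perm (Fin (n + 1))) : Equiv.Perm (Fin (n + 2)) :=
  finSuccEquivLast.symm.permCongr (Equiv.optionCongr w)

@[simp] lemma Amap_last (w : Equiv.Perm (Fin (n + 1))) :
    Amap w (Fin.last (n + 1)) = Fin.last (n + 1) := by
  simp [Amap]

@[simp] lemma Amap_castSucc (w : Equiv.Perm (Fin (n + 1))) (i : Fin (n + 1)) :
    Amap w (Fin.castSucc i) = Fin.castSucc (w i) := by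
  simp [Amap]


noncomputable section

open scoped Classical

def jOf (w : Equiv.Perm (Fin (n + 2))) : Fin (n + 1) :=
  (finSuccEquivLast (w (Fin.last (n + 1)))).getD 0

def vOf (w : Equiv.Perm (Fin (n + 2))) : Equiv.Perm (Fin n) :=
  Equiv.removeNone (Equiv.removeNone
    (Equiv.swap (none : Option (Option (Fin n))) (some none) * (eOpt (jOf w)).permCongr w))

def Ainv (w : Equiv.Perm (Fin (n + 2))) : Equiv.Perm (Fin (n + 1)) :=
  Equiv.removeNone (finSuccEquivLast.permCongr w)

@[simp] lemma jOf_Bmap (j : Fin (n + 1)) (v : Equiv.Perm (Fin n)) : jOf (Bmap j v) = j := by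
  simp [jOf]

@[simp] lemma vOf_Bmap (j : Fin (n + 1)) (v : Equiv.Perm (Fin n)) : vOf (Bmap j v) = v := by
  have h1 : (eOpt j).permCongr (Bmap j v) =
      Equiv.swap (none : Option (Option (Fin n))) (some none) *
        Equiv.optionCongr (Equiv.optionCongr v) := by
    rw [Bmap, ← Equiv.permCongr_symm, Equiv.apply_symm_apply]
  rw [vOf, jOf_Bmap, h1, ← mul_assoc, Equiv.swap_mul_self, one_mul,
    Equiv.removeNone_optionCongr, Equiv.removeNone_optionCongr]

@[simp] lemma Ainv_Amap (w : Equiv.Perm (Fin (n + 1))) : Ainv (Amap w) = w := by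
  rw [Ainv, Amap, ← Equiv.permCongr_symm, Equiv.apply_symm_apply, Equiv.removeNone_optionCongr]

lemma Bmap_vOf (w : Equiv.Perm (Fin (n + 2))) (hw : w * w = 1)
    (h : w (Fin.last (n + 1)) ≠ Fin.last (n + 1)) : Bmap (jOf w) (vOf w) = w := by
  -- first, w last = castSucc (jOf w)
  obtain ⟨c, hc⟩ : ∃ c, w (Fin.last (n + 1)) = Fin.castSucc c := by
    rcases Fin.eq_castSucc_or_eq_last (w (Fin.last (n + 1))) with ⟨c, hc⟩ | hl
    · exact ⟨c, hc⟩
    · exact absurd hl h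
  have hj : jOf w = c := by simp [jOf, hc]
  have hwc : w (Fin.castSucc c) = Fin.last (n + 1) := by
    have := congrArg (fun u => u (Fin.last (n + 1))) hw
    simp [Equiv.Perm.mul_apply] at this
    rw [← hc, this]
  set τ : Equiv.Perm (Option (Option (Fin n))) :=
    Equiv.swap (none : Option (Option (Fin n))) (some none) * (eOpt (jOf w)).permCongr w with hτ
  have hτn : τ none = none := by
    simp [hτ, Equiv.Perm.mul_apply, hj, hc, Equiv.swap_apply_right]
  have hτsn : τ (some none) = some none := by
    simp [hτ, Equiv.Perm.mul_apply, hj, hwc, Equiv.swap_apply_left]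
  have key : Equiv.optionCongr (Equiv.optionCongr (vOf w)) = τ := by
    rw [vOf, ← hτ]
    rw [optionCongr_removeNone _ ?hn, optionCongr_removeNone _ hτn]
    case hn =>
      apply Option.some_injective
      rw [Equiv.removeNone_some τ ⟨none, hτsn⟩, hτsn]
  rw [Bmap, key, hτ, ← mul_assoc, Equiv.swap_mul_self, one_mul]
  exact (eOpt (jOf w)).permCongr.symm_apply_apply w

lemma Amap_Ainv (w : Equiv.Perm (Fin (n + 2)))
    (h : w (Fin.last (n + 1)) = Fin.last (n + 1)) : Amap (Ainv w) = w := by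
  have hn : (finSuccEquivLast.permCongr w) none = none := by
    simp [h]
  rw [Amap, Ainv, optionCongr_removeNone _ hn, ← Equiv.permCongr_symm, Equiv.symm_apply_apply]

end


section Invol

lemma invol_apply {k : ℕ} {w : Equiv.Perm (Fin k)} (hw : w * w = 1) (x : Fin k) :
    w (w x) = x := by
  have := congrArg (fun u => u x) hw
  simpa [Equiv.Perm.mul_apply] using this

lemma Amap_invol {w : Equiv.Perm (Fin (n + 1))} (hw : w * w = 1) :
    Amap w * Amap w = 1 := by
  ext x
  refine Fin.lastCases ?_ (fun i => ?_) x <;>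
    simp [Equiv.Perm.mul_apply, invol_apply hw]

lemma Bmap_invol {j : Fin (n + 1)} {v : Equiv.Perm (Fin n)} (hv : v * v = 1) :
    Bmap j v * Bmap j v = 1 := by
  ext x
  refine Fin.lastCases ?_ (fun a => ?_) x
  · simp [Equiv.Perm.mul_apply]
  · refine Fin.succAboveCases j ?_ (fun i => ?_) a <;>
      simp [Equiv.Perm.mul_apply, invol_apply hv]

lemma Ainv_invol {w : Equiv.Perm (Fin (n + 2))} (hw : w * w = 1)
    (h : w (Fin.last (n + 1)) = Fin.last (n + 1)) : Ainv w * Ainv w = 1 := by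
  have hA := Amap_Ainv w h
  ext i
  have := invol_apply hw (Fin.castSucc i)
  rw [← hA] at this
  simp only [Amap_castSucc, Fin.castSucc_inj] at this
  exact congrArg Fin.val this

lemma vOf_invol {w : Equiv.Perm (Fin (n + 2))} (hw : w * w = 1)
    (h : w (Fin.last (n + 1)) ≠ Fin.last (n + 1)) : vOf w * vOf w = 1 := by
  have hB := Bmap_vOf w hw h
  have h2 : Bmap (jOf w) (vOf w) * Bmap (jOf w) (vOf w) = 1 := by rw [hB]; exact hw
  ext i
  have := invol_apply h2 (Fin.castSucc ((jOf w).succAbove i))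
  simp only [Bmap_succAbove, Fin.castSucc_inj] at this
  have := Fin.succAbove_right_injective (p := jOf w) this
  exact congrArg Fin.val this

end Invol

section Counting

lemma sum_decompA (h : Fin (n + 2) → ℕ) :
    ∑ x, h x = (∑ i : Fin (n + 1), h (Fin.castSucc i)) + h (Fin.last (n + 1)) :=
  Fin.sum_univ_castSucc h

lemma sum_decompB (j : Fin (n + 1)) (h : Fin (n + 2) → ℕ) :
    ∑ x, h x = h (Fin.last (n + 1)) + h (Fin.castSucc j) +
      ∑ i : Fin n, h (Fin.castSucc (j.succAbove i)) := by
  rw [Fin.sum_univ_castSucc, Fin.sum_univ_succAbove (fun a => h (Fin.castSucc a)) j]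
  ring

lemma not_last_lt (x : Fin (n + 2)) : ¬ (Fin.last (n + 1) < x) := not_lt.2 (Fin.le_last x)

lemma fixCount_eq {k : ℕ} (w : Equiv.Perm (Fin k)) :
    fixCount w = ∑ x : Fin k, if w x = x then 1 else 0 := by
  rw [fixCount, Finset.card_filter]

lemma neatCount_eq {k : ℕ} (w : Equiv.Perm (Fin k)) :
    neatCount w = ∑ x : Fin k, ∑ y : Fin k,
      if x < y ∧ w x < y ∧ w y < x then 1 else 0 := by
  rw [neatCount, Finset.card_filter, Finset.sum_product]

lemma fixCount_le {k : ℕ} (w : Equiv.Perm (Fin k)) : fixCount w ≤ k :=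
  le_trans (Finset.card_filter_le _ _) (by simp)

lemma fixCount_Amap (w : Equiv.Perm (Fin (n + 1))) :
    fixCount (Amap w) = fixCount w + 1 := by
  rw [fixCount_eq, fixCount_eq, sum_decompA]
  simp [Fin.castSucc_inj]

lemma fixCount_Bmap (j : Fin (n + 1)) (v : Equiv.Perm (Fin n)) :
    fixCount (Bmap j v) = fixCount v := by
  rw [fixCount_eq, fixCount_eq, sum_decompB j]
  simp [(Fin.castSucc_lt_last j).ne, (Fin.castSucc_lt_last j).ne', Fin.castSucc_inj,
    Fin.succAbove_right_injective.eq_iff]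

lemma count_gt (j : Fin (n + 1)) :
    (∑ a : Fin n, if j < j.succAbove a then 1 else 0) = n - (j : ℕ) := by
  have h : ∀ a : Fin n, (j < j.succAbove a) ↔ ((j : ℕ) ≤ (a : ℕ)) := by
    intro a
    rw [Fin.lt_succAbove_iff_le_castSucc]
    simp [Fin.le_def]
  simp only [h]
  rw [Fin.sum_univ_eq_sum_range (fun m => if (j : ℕ) ≤ m then 1 else 0) n, ← Finset.card_filter]
  have : Finset.filter (fun m => (j : ℕ) ≤ m) (Finset.range n) = Finset.Ico (j : ℕ) n := by
    ext m
    simp [Finset.mem_range, Finset.mem_Ico, and_comm]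
  rw [this, Nat.card_Ico]

lemma neatCount_Amap (w : Equiv.Perm (Fin (n + 1))) :
    neatCount (Amap w) = neatCount w := by
  rw [neatCount_eq, neatCount_eq]
  simp only [sum_decompA]
  simp [not_last_lt, Fin.castSucc_lt_castSucc_iff, Fin.castSucc_lt_last]

lemma neatCount_Bmap (j : Fin (n + 1)) (v : Equiv.Perm (Fin n)) :
    neatCount (Bmap j v) = neatCount v + (n - (j : ℕ)) := by
  rw [neatCount_eq, neatCount_eq]
  simp only [sum_decompB j]
  rw [← count_gt j]
  simp [not_last_lt, Fin.castSucc_lt_castSucc_iff, Fin.castSucc_lt_last,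
    Fin.succAbove_lt_succAbove_iff]
  rw [Finset.sum_add_distrib, add_comm]
  congr 1
  rw [Finset.card_filter]

end Counting


lemma f_zero (p q : ℂ) : f 0 p q = 1 := by
  have h1 : ∀ w : Equiv.Perm (Fin 0), w = 1 := fun w => Equiv.ext fun i => i.elim0
  rw [f, show Finset.univ.filter (fun w : Equiv.Perm (Fin 0) => w * w = 1) = {1} by
    ext w; simp [h1 w], Finset.sum_singleton]
  simp [fixCount, neatCount]

lemma f_one (p q : ℂ) : f 1 p q = 1 - p := by
  have h1 : ∀ w : Equiv.Perm (Fin 1), w = 1 := fun w =>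
    Equiv.ext fun i => Subsingleton.elim _ _
  rw [f, show Finset.univ.filter (fun w : Equiv.Perm (Fin 1) => w * w = 1) = {1} by
    ext w; simp [h1 w], Finset.sum_singleton]
  have h2 : fixCount (1 : Equiv.Perm (Fin 1)) = 1 := by simp [fixCount]
  have h3 : neatCount (1 : Equiv.Perm (Fin 1)) = 0 := by
    rw [neatCount, Finset.card_eq_zero, Finset.filter_eq_empty_iff]
    rintro ⟨x, y⟩ -
    simp [Subsingleton.elim x y, lt_irrefl]
  rw [h2, h3]
  simp

lemma f_rec (n : ℕ) (p q : ℂ) :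
    f (n + 2) p q = p * (1 - q ^ (n + 1)) * f n p q + (1 - p) * f (n + 1) p q := by
  classical
  have hsplit := Finset.sum_filter_add_sum_filter_not
      (Finset.univ.filter (fun w : Equiv.Perm (Fin (n + 2)) => w * w = 1))
      (fun w => w (Fin.last (n + 1)) = Fin.last (n + 1))
      (fun w => (p * (1 - q)) ^ ((n + 2 - fixCount w) / 2) * (1 - p) ^ fixCount w *
        q ^ neatCount w)
  rw [f, ← hsplit]
  have hA : ∑ w ∈ (Finset.univ.filter (fun w : Equiv.Perm (Fin (n + 2)) => w * w = 1)).filter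
        (fun w => w (Fin.last (n + 1)) = Fin.last (n + 1)),
      (p * (1 - q)) ^ ((n + 2 - fixCount w) / 2) * (1 - p) ^ fixCount w * q ^ neatCount w
      = (1 - p) * f (n + 1) p q := by
    rw [f, Finset.mul_sum]
    symm
    refine Finset.sum_nbij' (fun w => Amap w) (fun w => Ainv w) ?_ ?_ ?_ ?_ ?_
    · intro w hw
      simp only [Finset.mem_filter, Finset.mem_univ, true_and] at hw ⊢
      exact ⟨Amap_invol hw, Amap_last w⟩
    · intro w hw
      simp only [Finset.mem_filter, Finset.mem_univ, true_and] at hw ⊢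
      exact Ainv_invol hw.1 hw.2
    · intro w _
      exact Ainv_Amap w
    · intro w hw
      simp only [Finset.mem_filter, Finset.mem_univ, true_and] at hw
      exact Amap_Ainv w hw.2
    · intro w hw
      rw [fixCount_Amap, neatCount_Amap, Nat.succ_sub_succ, pow_succ]
      ring
  have hB : ∑ w ∈ (Finset.univ.filter (fun w : Equiv.Perm (Fin (n + 2)) => w * w = 1)).filter
        (fun w => ¬ w (Fin.last (n + 1)) = Fin.last (n + 1)),
      (p * (1 - q)) ^ ((n + 2 - fixCount w) / 2) * (1 - p) ^ fixCount w * q ^ neatCount w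
      = p * (1 - q ^ (n + 1)) * f n p q := by
    symm
    calc p * (1 - q ^ (n + 1)) * f n p q
        = ∑ jv ∈ (Finset.univ : Finset (Fin (n + 1))) ×ˢ
            (Finset.univ.filter (fun v : Equiv.Perm (Fin n) => v * v = 1)),
            (p * (1 - q)) * q ^ (n - (jv.1 : ℕ)) *
              ((p * (1 - q)) ^ ((n - fixCount jv.2) / 2) * (1 - p) ^ fixCount jv.2 *
                q ^ neatCount jv.2) := by
          rw [Finset.sum_product]
          have hgeom : (1 : ℂ) - q ^ (n + 1) =
              (∑ i ∈ Finset.range (n + 1), q ^ i) * (1 - q) := by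
            have := geom_sum_mul q (n + 1)
            linear_combination this
          have hrefl : ∑ j : Fin (n + 1), q ^ (n - (j : ℕ)) =
              ∑ i ∈ Finset.range (n + 1), q ^ i := by
            rw [Fin.sum_univ_eq_sum_range (fun m => q ^ (n - m)) (n + 1),
              ← Finset.sum_range_reflect]
            refine Finset.sum_congr rfl fun x hx => ?_
            rw [Finset.mem_range] at hx
            congr 1
            omega
          calc p * (1 - q ^ (n + 1)) * f n p q
              = ∑ j : Fin (n + 1), q ^ (n - (j : ℕ)) * ((p * (1 - q)) * f n p q) := by
                rw [← Finset.sum_mul, hrefl, hgeom]; ring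
            _ = _ := by
                refine Finset.sum_congr rfl fun j _ => ?_
                rw [f, Finset.mul_sum, Finset.mul_sum]
                refine Finset.sum_congr rfl fun v _ => ?_
                ring
      _ = _ := by
          refine Finset.sum_nbij' (fun jv => Bmap jv.1 jv.2) (fun w => (jOf w, vOf w))
            ?_ ?_ ?_ ?_ ?_
          · rintro ⟨j, v⟩ hjv
            simp only [Finset.mem_product, Finset.mem_filter, Finset.mem_univ, true_and] at hjv ⊢
            exact ⟨Bmap_invol hjv, by rw [Bmap_last]; exact (Fin.castSucc_lt_last j).ne⟩
          · intro w hw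
            simp only [Finset.mem_product, Finset.mem_filter, Finset.mem_univ, true_and] at hw ⊢
            exact vOf_invol hw.1 hw.2
          · rintro ⟨j, v⟩ _
            exact Prod.ext (jOf_Bmap j v) (vOf_Bmap j v)
          · intro w hw
            simp only [Finset.mem_filter, Finset.mem_univ, true_and] at hw
            exact Bmap_vOf w hw.1 hw.2
          · rintro ⟨j, v⟩ hjv
            simp only [Finset.mem_product, Finset.mem_filter, Finset.mem_univ, true_and] at hjv
            rw [fixCount_Bmap, neatCount_Bmap]
            have hle : fixCount v ≤ n := fixCount_le v
            have hdiv : (n + 2 - fixCount v) / 2 = (n - fixCount v) / 2 + 1 := by omega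
            rw [hdiv, pow_succ, pow_add]
            ring
  rw [hA, hB]
  ring

end Aux

/-- the recurrence for `f_k`. -/
theorem f_recurrence (p q : ℂ) :
    f 1 p q = 1 - p ∧ f 2 p q = 1 - (1 + q) * p + p ^ 2 ∧
    ∀ k : ℕ, 3 ≤ k →
      f k p q = p * (1 - q ^ (k - 1)) * f (k - 2) p q + (1 - p) * f (k - 1) p q := by
  refine ⟨f_one p q, ?_, ?_⟩
  · have h := f_rec 0 p q
    rw [f_zero, f_one] at h
    norm_num at h
    rw [h]
    ring
  · intro k hk
    obtain ⟨m, rfl⟩ : ∃ m, k = m + 2 := ⟨k - 2, by omega⟩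
    have h1 : m + 2 - 1 = m + 1 := by omega
    have h2 : m + 2 - 2 = m := by omega
    rw [h1, h2]
    exact f_rec m p q

end PaperF
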